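/- Let u, v, w be positive real numbers. There exist three non-collinear points A, B, C in the Euclidean plane ℝ² such that the distance from A to the line through B and C equals u, the distance from B to the line through A and C equals v, and the distance from C to the line through A and B equals w, if and only if 1/u + 1/v + 1/w > 2·max(1/u, 1/v, 1/w). -/

import Mathlib

open Metric

noncomputable section AltAux

private abbrev E2 := EuclideanSpace ℝ (Fin 2)

private def det2 (x y : E2) : ℝ := x 0 * y 1 - x 1 * y 0

private lemma norm_sq (x : E2) : ‖x‖ ^ 2 = x 0 ^ 2 + x 1 ^ 2 := by
  rw [EuclideanSpace.norm_eq, Real.sq_sqrt (by positivity)]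
  simp [Fin.sum_univ_two, Real.norm_eq_abs, sq_abs]

private lemma abs_det2_le (z d : E2) : |det2 z d| ≤ ‖z‖ * ‖d‖ := by
  have h2 : det2 z d ^ 2 ≤ (‖z‖ * ‖d‖) ^ 2 := by
    rw [mul_pow, norm_sq, norm_sq, det2]
    nlinarith [sq_nonneg (z 0 * d 0 + z 1 * d 1)]
  calc |det2 z d| = Real.sqrt (det2 z d ^ 2) := (Real.sqrt_sq_eq_abs _).symm
    _ ≤ Real.sqrt ((‖z‖ * ‖d‖) ^ 2) := Real.sqrt_le_sqrt h2
    _ = ‖z‖ * ‖d‖ := Real.sqrt_sq (by positivity)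

private lemma key (A B C : E2) (h : B ≠ C) :
    infDist A (affineSpan ℝ {B, C} : Set E2) = |det2 (A - B) (C - B)| / dist B C := by
  have hd : C - B ≠ 0 := sub_ne_zero.mpr (Ne.symm h)
  have hD : (0:ℝ) < ‖C - B‖ := norm_pos_iff.mpr hd
  have hdist : dist B C = ‖C - B‖ := by rw [dist_eq_norm, ← neg_sub, norm_neg]
  set d : E2 := C - B with hdef
  have hDsum : (0:ℝ) < d 0 ^ 2 + d 1 ^ 2 := by
    have := norm_sq d; nlinarith
  apply le_antisymm
  · set z : E2 := A - B with hz
    set r : ℝ := (z 0 * d 0 + z 1 * d 1) / (d 0 ^ 2 + d 1 ^ 2) with hr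
    have hmem : r • (C -ᵥ B) +ᵥ B ∈ (affineSpan ℝ {B, C} : AffineSubspace ℝ E2) :=
      smul_vsub_vadd_mem_affineSpan_pair r B C
    have hle := infDist_le_dist_of_mem (x := A) hmem
    have heq : dist A (r • (C -ᵥ B) +ᵥ B) = |det2 z d| / dist B C := by
      rw [dist_eq_norm, hdist, vsub_eq_sub, vadd_eq_add, ← hdef]
      have h1 : A - (r • d + B) = z - r • d := by rw [hz]; abel
      rw [h1]
      have hsq : ‖z - r • d‖ ^ 2 = (|det2 z d| / ‖d‖) ^ 2 := by
        rw [norm_sq, div_pow, sq_abs, norm_sq]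
        simp only [PiLp.sub_apply, PiLp.smul_apply, smul_eq_mul, det2, hr]
        field_simp
        ring
      have h0 : (0:ℝ) ≤ ‖z - r • d‖ := norm_nonneg _
      have h0' : (0:ℝ) ≤ |det2 z d| / ‖d‖ := by positivity
      calc ‖z - r • d‖ = Real.sqrt (‖z - r • d‖ ^ 2) := (Real.sqrt_sq h0).symm
        _ = Real.sqrt ((|det2 z d| / ‖d‖) ^ 2) := by rw [hsq]
        _ = |det2 z d| / ‖d‖ := Real.sqrt_sq h0'
    rw [← heq]; exact hle
  · rw [infDist_eq_iInf]
    have hne : Nonempty (affineSpan ℝ ({B, C} : Set E2) : Set E2) :=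
      ⟨B, left_mem_affineSpan_pair ℝ B C⟩
    refine le_ciInf fun q => ?_
    obtain ⟨q, hq⟩ := q
    obtain ⟨r, hrq⟩ : ∃ r : ℝ, r • (C -ᵥ B) = q - B := by
      rw [← vadd_left_mem_affineSpan_pair (k := ℝ) (p₁ := B) (p₂ := C) (v := q - B)]
      rwa [vadd_eq_add, sub_add_cancel]
    rw [vsub_eq_sub] at hrq
    have hAq : A - q = (A - B) - r • d := by rw [hrq]; abel
    have hdet : det2 (A - B) d = det2 (A - q) d := by
      rw [hAq]
      simp only [det2, PiLp.sub_apply, PiLp.smul_apply, smul_eq_mul]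
      ring
    have hle2 : |det2 (A - q) d| ≤ ‖A - q‖ * ‖d‖ := abs_det2_le _ _
    rw [hdist, div_le_iff₀ hD, hdef] at *
    rw [hdet]
    calc |det2 (A - q) (C - B)| ≤ ‖A - q‖ * ‖C - B‖ := hle2
      _ = dist A q * ‖C - B‖ := by rw [dist_eq_norm]

private lemma det2_eq_zero_of_collinear {A B C : E2} (h : Collinear ℝ ({A, B, C} : Set E2)) :
    det2 (B - A) (C - A) = 0 := by
  obtain ⟨v, hv⟩ := (collinear_iff_of_mem (Set.mem_insert A {B, C})).mp h
  obtain ⟨r₁, hB⟩ := hv B (by simp)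
  obtain ⟨r₂, hC⟩ := hv C (by simp)
  rw [vadd_eq_add] at hB hC
  have h1 : B - A = r₁ • v := by rw [hB]; abel
  have h2 : C - A = r₂ • v := by rw [hC]; abel
  rw [h1, h2]
  simp only [det2, PiLp.smul_apply, smul_eq_mul]
  ring

private def pt (a b : ℝ) : E2 := (WithLp.equiv 2 (Fin 2 → ℝ)).symm ![a, b]

@[simp] private lemma pt_apply0 (a b : ℝ) : pt a b 0 = a := rfl
@[simp] private lemma pt_apply1 (a b : ℝ) : pt a b 1 = b := rfl

private lemma dist_pt (a b c d : ℝ) :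
    dist (pt a b) (pt c d) = Real.sqrt ((a - c)^2 + (b - d)^2) := by
  rw [EuclideanSpace.dist_eq]
  congr 1
  simp [Fin.sum_univ_two, Real.dist_eq, sq_abs]

private lemma tri_max {a b c T : ℝ} (hT : 0 < T) (h1 : a < b + c) (h2 : b < a + c)
    (h3 : c < a + b) :
    2 * max (a / T) (max (b / T) (c / T)) < a / T + b / T + c / T := by
  have e : ∀ s t : ℝ, s < t → s / T < t / T := fun s t h =>
    div_lt_div_of_pos_right h hT
  have e1 := e _ _ h1
  have e2 := e _ _ h2
  have e3 := e _ _ h3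
  rw [add_div] at e1 e2 e3
  rcases max_choice (a / T) (max (b / T) (c / T)) with h | h <;> rw [h]
  · linarith
  · rcases max_choice (b / T) (c / T) with h' | h' <;> rw [h'] <;> linarith

end AltAux

set_option maxHeartbeats 1000000 in
theorem altitudes_existence (u v w : ℝ) (hu : 0 < u) (hv : 0 < v) (hw : 0 < w) :
    (∃ A B C : EuclideanSpace ℝ (Fin 2),
      ¬ Collinear ℝ ({A, B, C} : Set (EuclideanSpace ℝ (Fin 2))) ∧
      infDist A (affineSpan ℝ {B, C} : Set (EuclideanSpace ℝ (Fin 2))) = u ∧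
      infDist B (affineSpan ℝ {A, C} : Set (EuclideanSpace ℝ (Fin 2))) = v ∧
      infDist C (affineSpan ℝ {A, B} : Set (EuclideanSpace ℝ (Fin 2))) = w) ↔
    1 / u + 1 / v + 1 / w > 2 * max (1 / u) (max (1 / v) (1 / w)) := by
  constructor
  · rintro ⟨A, B, C, hnc, hA, hB, hC⟩
    have hBC : B ≠ C := by
      rintro rfl; exact hnc (by simpa using collinear_pair ℝ A B)
    have hAC : A ≠ C := by
      rintro rfl; exact hnc (by simpa [Set.insert_comm] using collinear_pair ℝ B A)
    have hAB : A ≠ B := by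
      rintro rfl; exact hnc (by simpa [Set.insert_comm] using collinear_pair ℝ A C)
    rw [key A B C hBC] at hA
    rw [key B A C hAC] at hB
    rw [key C A B hAB] at hC
    set T := |det2 (B - A) (C - A)| with hTdef
    have n1 : |det2 (A - B) (C - B)| = T := by
      have : det2 (A - B) (C - B) = -det2 (B - A) (C - A) := by
        simp only [det2, PiLp.sub_apply]; ring
      rw [this, abs_neg]
    have n3 : |det2 (C - A) (B - A)| = T := by
      have : det2 (C - A) (B - A) = -det2 (B - A) (C - A) := by
        simp only [det2, PiLp.sub_apply]; ring
      rw [this, abs_neg]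
    rw [n1] at hA
    rw [n3] at hC
    have ha : (0:ℝ) < dist B C := dist_pos.mpr hBC
    have hb : (0:ℝ) < dist A C := dist_pos.mpr hAC
    have hc : (0:ℝ) < dist A B := dist_pos.mpr hAB
    have hT : (0:ℝ) < T := by
      rcases (abs_nonneg (det2 (B - A) (C - A))).lt_or_eq with h | h
      · exact h
      · exfalso
        have hT0 : T = 0 := h.symm
        rw [hT0, zero_div] at hA
        linarith
    -- strict triangle inequalities
    have s1 : dist B C < dist A C + dist A B := by
      refine lt_of_le_of_ne ((dist_triangle B A C).trans_eq (by rw [dist_comm B A]; ring)) ?_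
      intro hEq
      have hw' : Wbtw ℝ B A C := by
        rw [← dist_add_dist_eq_iff, dist_comm B A]
        linarith [hEq]
      exact hnc (by simpa [Set.insert_comm] using hw'.collinear)
    have s2 : dist A C < dist B C + dist A B := by
      refine lt_of_le_of_ne ((dist_triangle A B C).trans_eq (by rw [dist_comm A B]; ring)) ?_
      intro hEq
      have hw' : Wbtw ℝ A B C := by
        rw [← dist_add_dist_eq_iff]
        linarith [hEq]
      exact hnc hw'.collinear
    have s3 : dist A B < dist B C + dist A C := by
      refine lt_of_le_of_ne ((dist_triangle A C B).trans_eq (by rw [dist_comm C B]; ring)) ?_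
      intro hEq
      have hw' : Wbtw ℝ A C B := by
        rw [← dist_add_dist_eq_iff, dist_comm C B]
        linarith [hEq]
      exact hnc (by simpa [Set.pair_comm] using hw'.collinear)
    rw [← hA, ← hB, ← hC, one_div_div, one_div_div, one_div_div]
    exact tri_max hT s1 s2 s3
  · intro hineq
    set α := 1 / u with hα
    set β := 1 / v with hβ
    set γ := 1 / w with hγ
    have hα0 : 0 < α := by positivity
    have hβ0 : 0 < β := by positivity
    have hγ0 : 0 < γ := by positivity
    have m1 : α ≤ max α (max β γ) := le_max_left _ _
    have m2 : β ≤ max α (max β γ) := le_trans (le_max_left β γ) (le_max_right _ _)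
    have m3 : γ ≤ max α (max β γ) := le_trans (le_max_right β γ) (le_max_right _ _)
    have h1 : α < β + γ := by linarith
    have h2 : β < α + γ := by linarith
    have h3 : γ < α + β := by linarith
    set x : ℝ := (α^2 + γ^2 - β^2) / (2*α) with hxdef
    have hx2 : 2*α*x = α^2 + γ^2 - β^2 := by
      rw [hxdef]; field_simp
    have hyx : 0 < γ^2 - x^2 := by
      have hfac : 0 < ((α+γ-β)*(α+γ+β))*((β-(α-γ))*(β+(α-γ))) := by
        apply mul_pos (mul_pos (by linarith) (by linarith))
          (mul_pos (by linarith) (by linarith))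
      nlinarith [sq_nonneg α, mul_pos hα0 hα0]
    set y : ℝ := Real.sqrt (γ^2 - x^2) with hydef
    have hy : 0 < y := Real.sqrt_pos.mpr hyx
    have hy2 : y^2 = γ^2 - x^2 := Real.sq_sqrt hyx.le
    set l : ℝ := u / y with hldef
    have hl : 0 < l := by positivity
    have hly : l * y = u := div_mul_cancel₀ u hy.ne'
    have huα : u * α = 1 := by rw [hα]; field_simp
    have hvβ : v * β = 1 := by rw [hβ]; field_simp
    have hwγ : w * γ = 1 := by rw [hγ]; field_simp
    refine ⟨pt (l*x) (l*y), pt 0 0, pt (l*α) 0, ?_, ?_, ?_, ?_⟩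
    · -- non-collinear
      intro hcol
      have h0 := det2_eq_zero_of_collinear hcol
      simp only [det2, PiLp.sub_apply, pt_apply0, pt_apply1] at h0
      have : l * y * (l * α) = 0 := by linarith [h0]
      nlinarith [mul_pos (mul_pos hl hy) (mul_pos hl hα0)]
    · -- altitude from A
      have hne : pt 0 0 ≠ pt (l*α) 0 := by
        intro hq
        have h0 : (0:ℝ) = l*α := congrArg (fun p : E2 => p 0) hq
        nlinarith [mul_pos hl hα0]
      rw [key _ _ _ hne]
      have hdet : det2 (pt (l*x) (l*y) - pt 0 0) (pt (l*α) 0 - pt 0 0) = -(l*y*(l*α)) := by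
        simp only [det2, PiLp.sub_apply, pt_apply0, pt_apply1]; ring
      have hdd : dist (pt 0 0) (pt (l*α) 0) = l*α := by
        rw [dist_pt]
        rw [show (0 - l*α)^2 + ((0:ℝ) - 0)^2 = (l*α)^2 by ring]
        exact Real.sqrt_sq (by positivity)
      rw [hdet, hdd, abs_neg, abs_of_pos (by positivity),
        div_eq_iff (show (l*α) ≠ 0 by positivity)]
      linear_combination (l*α) * hly
    · -- altitude from B
      have hne : pt (l*x) (l*y) ≠ pt (l*α) 0 := by
        intro hq
        have h0 : l*y = 0 := congrArg (fun p : E2 => p 1) hq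
        nlinarith [mul_pos hl hy]
      rw [key _ _ _ hne]
      have hdet : det2 (pt 0 0 - pt (l*x) (l*y)) (pt (l*α) 0 - pt (l*x) (l*y))
          = l*y*(l*α) := by
        simp only [det2, PiLp.sub_apply, pt_apply0, pt_apply1]; ring
      have hdd : dist (pt (l*x) (l*y)) (pt (l*α) 0) = l*β := by
        rw [dist_pt]
        rw [show (l*x - l*α)^2 + (l*y - 0)^2 = (l*β)^2 by
          linear_combination l^2 * hy2 - l^2 * hx2]
        exact Real.sqrt_sq (by positivity)
      rw [hdet, hdd, abs_of_pos (by positivity),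
        div_eq_iff (show (l*β) ≠ 0 by positivity)]
      linear_combination (l*α) * hly + l * huα - l * hvβ
    · -- altitude from C
      have hne : pt (l*x) (l*y) ≠ pt 0 0 := by
        intro hq
        have h0 : l*y = 0 := congrArg (fun p : E2 => p 1) hq
        nlinarith [mul_pos hl hy]
      rw [key _ _ _ hne]
      have hdet : det2 (pt (l*α) 0 - pt (l*x) (l*y)) (pt 0 0 - pt (l*x) (l*y))
          = -(l*y*(l*α)) := by
        simp only [det2, PiLp.sub_apply, pt_apply0, pt_apply1]; ring
      have hdd : dist (pt (l*x) (l*y)) (pt 0 0) = l*γ := by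
        rw [dist_pt]
        rw [show (l*x - 0)^2 + (l*y - 0)^2 = (l*γ)^2 by
          linear_combination l^2 * hy2]
        exact Real.sqrt_sq (by positivity)
      rw [hdet, hdd, abs_neg, abs_of_pos (by positivity),
        div_eq_iff (show (l*γ) ≠ 0 by positivity)]
      linear_combination (l*α) * hly + l * huα - l * hwγ
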